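/- arXiv:2603.02157 — 2 statements merged into one kernel-verified Lean document; each statement's English description precedes it below -/
import Mathlib

section
/- Relative expansion version: under the same setup, suppose instead each ∂_{G[i],1} satisfies the relative expansion bound |∂_{G[i],1}(v_i)| ≥ min(d, |S(v_i) ∩ P_i|, |P_i \ S(v_i)|), where S(v_i) is the support of v_i and P_i ⊆ indices of G[i]_1 is the set of indices mapped bijectively onto the support of c_i by g[i]_1 (so |g[i]_1(v_i)| = |S(v_i) ∩ P_i| and |c_i| − |g[i]_1(v_i)| = |P_i \ S(v_i)|). If every nonzero element of ker(∂_C) has Hamming weight ≥ d, then again |c_j + ∑_i g[i]_1(v_i)| + ∑_i |∂_{G[i],1}(v_i)| ≥ d for all unmeasured representatives c_j and all (v_1,…,v_t), hence d_1(cone(ḡ)) ≥ d. -/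
open Matrix

/-- The support of a vector over `𝔽₂`, as a `Finset`. -/
def suppF {n : ℕ} (v : Fin n → ZMod 2) : Finset (Fin n) := {j | v j ≠ 0}

lemma hammingNorm_add_le' {n : ℕ} (a b : Fin n → ZMod 2) :
    hammingNorm (a + b) ≤ hammingNorm a + hammingNorm b := by
  classical
  unfold hammingNorm
  calc ({i | (a + b) i ≠ 0} : Finset (Fin n)).card
      ≤ (({i | a i ≠ 0} : Finset (Fin n)) ∪ ({i | b i ≠ 0} : Finset (Fin n))).card := by
        apply Finset.card_le_card
        intro i hi
        simp only [Finset.mem_filter, Finset.mem_union, Finset.mem_univ, true_and,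
          Pi.add_apply] at *
        by_contra h
        push_neg at h
        simp [h.1, h.2] at hi
    _ ≤ _ := Finset.card_union_le _ _

lemma hammingNorm_sum_le' {n : ℕ} {ι : Type*} (s : Finset ι) (f : ι → Fin n → ZMod 2) :
    hammingNorm (∑ i ∈ s, f i) ≤ ∑ i ∈ s, hammingNorm (f i) := by
  classical
  induction s using Finset.induction with
  | empty => simp
  | insert _ _ h ih =>
    rw [Finset.sum_insert h, Finset.sum_insert h]
    exact (hammingNorm_add_le' _ _).trans (by omega)


/-- relative expansion version: with the same setup as the
Cheeger-constant version, suppose instead each `∂_{G[i],1}` satisfies the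
relative expansion bound
`|∂_{G[i],1}(v)| ≥ min(d, |S(v) ∩ P_i|, |P_i \ S(v)|)`,
where `P_i` is the index set of `G[i]₁` mapped bijectively onto the support of
`c_i` by `g[i]₁` (so that `|g[i]₁(v)| = |S(v) ∩ P_i|` and
`|c_i + g[i]₁(v)| = |P_i \ S(v)|`).  If every nonzero element of `ker ∂_C` has
Hamming weight `≥ d`, then for every unmeasured representative `c_j` and all
`(v_1,…,v_t)`, `|c_j + ∑_i g[i]₁(v_i)| + ∑_i |∂_{G[i],1}(v_i)| ≥ d`
(consequently, `d₁(cone(ḡ)) ≥ d`). -/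
theorem deformed_chain_weight_lower_bound_relative_expansion
    (t c1n c0n : ℕ) (d : ℕ)
    (g1n g0n : Fin t → ℕ)
    (dC : Matrix (Fin c0n) (Fin c1n) (ZMod 2))
    (dG1 : ∀ i, Matrix (Fin (g0n i)) (Fin (g1n i)) (ZMod 2))
    (gmap1 : ∀ i, Matrix (Fin c1n) (Fin (g1n i)) (ZMod 2))
    (c : Fin t → Fin c1n → ZMod 2)
    (P : ∀ i : Fin t, Finset (Fin (g1n i)))
    (hcker : ∀ i, dC.mulVecLin (c i) = 0)
    (hdistC : ∀ x : Fin c1n → ZMod 2, dC.mulVecLin x = 0 → x ≠ 0 → d ≤ hammingNorm x)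
    (hg1card : ∀ i (v : Fin (g1n i) → ZMod 2),
      hammingNorm ((gmap1 i).mulVecLin v) = (suppF v ∩ P i).card)
    (hgc : ∀ i (v : Fin (g1n i) → ZMod 2),
      hammingNorm (c i + (gmap1 i).mulVecLin v) = (P i \ suppF v).card)
    (hrelexp : ∀ i (v : Fin (g1n i) → ZMod 2),
      min d (min ((suppF v ∩ P i).card) ((P i \ suppF v).card))
        ≤ hammingNorm ((dG1 i).mulVecLin v))
    (cj : Fin c1n → ZMod 2)
    (hcjker : dC.mulVecLin cj = 0)
    (hcjindep : cj ∉ Submodule.span (ZMod 2) (Set.range c))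
    (v : ∀ i, Fin (g1n i) → ZMod 2) :
    d ≤ hammingNorm (cj + ∑ i, (gmap1 i).mulVecLin (v i))
        + ∑ i, hammingNorm ((dG1 i).mulVecLin (v i)) := by
  classical
  by_cases hbig : ∃ i, d ≤ hammingNorm ((dG1 i).mulVecLin (v i))
  · obtain ⟨i, hi⟩ := hbig
    have h2 : hammingNorm ((dG1 i).mulVecLin (v i))
        ≤ ∑ i, hammingNorm ((dG1 i).mulVecLin (v i)) :=
      Finset.single_le_sum (f := fun i => hammingNorm ((dG1 i).mulVecLin (v i)))
        (fun _ _ => Nat.zero_le _) (Finset.mem_univ i)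
    omega
  · push_neg at hbig
    set w : Fin t → Fin c1n → ZMod 2 := fun i => (gmap1 i).mulVecLin (v i) with hw
    set e : Fin t → ZMod 2 := fun i =>
      if (suppF (v i) ∩ P i).card ≤ (P i \ suppF (v i)).card then 0 else 1 with he
    have key : ∀ i, hammingNorm (e i • c i + w i)
        ≤ hammingNorm ((dG1 i).mulVecLin (v i)) := by
      intro i
      have h := hrelexp i (v i)
      have hlt := hbig i
      by_cases hc : (suppF (v i) ∩ P i).card ≤ (P i \ suppF (v i)).card
      · have : e i = 0 := by simp [he, hc]
        rw [this, zero_smul, zero_add, hw]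
        rw [hg1card i (v i)] at *
        omega
      · have : e i = 1 := by simp [he, hc]
        rw [this, one_smul, hw]
        rw [hgc i (v i)] at *
        omega
    set x : Fin c1n → ZMod 2 := cj + ∑ i, e i • c i with hx
    have hxker : dC.mulVecLin x = 0 := by
      rw [hx, map_add, map_sum, hcjker]
      simp [_root_.map_smul, hcker]
    have hxne : x ≠ 0 := by
      intro h0
      apply hcjindep
      have hself : ∀ a : Fin c1n → ZMod 2, a + a = 0 := by
        intro a; funext j
        simpa using CharTwo.add_self_eq_zero (a j)
      have h1 : ∑ i, e i • c i = cj := by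
        have := congrArg (· + ∑ i, e i • c i) h0
        simpa [hx, add_assoc, hself] using this.symm
      rw [← h1]
      exact Submodule.sum_mem _ fun i _ =>
        Submodule.smul_mem _ _ (Submodule.subset_span ⟨i, rfl⟩)
    have hd : d ≤ hammingNorm x := hdistC x hxker hxne
    have hself : ∀ a : Fin c1n → ZMod 2, a + a = 0 := by
      intro a; funext j
      simpa using CharTwo.add_self_eq_zero (a j)
    have hdecomp : x = (cj + ∑ i, w i) + ∑ i, (e i • c i + w i) := by
      rw [Finset.sum_add_distrib, hx]
      have : (cj + ∑ i, w i) + ((∑ i, e i • c i) + ∑ i, w i)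
          = (cj + ∑ i, e i • c i) + ((∑ i, w i) + ∑ i, w i) := by ring
      rw [this, hself, add_zero]
    have htri : hammingNorm x ≤ hammingNorm (cj + ∑ i, w i)
        + ∑ i, hammingNorm (e i • c i + w i) := by
      rw [hdecomp]
      exact (hammingNorm_add_le' _ _).trans
        (Nat.add_le_add_left (hammingNorm_sum_le' _ _) _)
    have hsum : ∑ i, hammingNorm (e i • c i + w i)
        ≤ ∑ i, hammingNorm ((dG1 i).mulVecLin (v i)) :=
      Finset.sum_le_sum fun i _ => key i
    exact le_trans hd (le_trans htri (Nat.add_le_add (le_refl _) hsum))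
end

section
/- Metacheck distance of the ancilla product complex: Let G[i] be a three-term complex with d^1(G[i]) = 1 and with empty 0-cohomology (so d^0(G[i]) = ∞ by convention), and let D be a two-term complex with d^0(D) = d and d^1(D) = 1. Then the 1-cosystolic distance of the product satisfies d^1(G[i]⊗D) = min(d^1(G[i])·d^0(D), d^0(G[i])·d^1(D)) = min(1·d, ∞·1) = d. -/
open Matrix Kronecker

/-- The (co)systolic distance of a based `𝔽₂`-complex at the middle term of
`· --B--> · --A--> ·`, with convention `∞` for trivial (co)homology. -/
noncomputable def sysDist {ι κ τ : Type} [Fintype ι] [Fintype κ] [Fintype τ]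
    (A : Matrix κ ι (ZMod 2)) (B : Matrix ι τ (ZMod 2)) : ℕ∞ :=
  sInf {w : ℕ∞ | ∃ x : ι → ZMod 2,
    A.mulVecLin x = 0 ∧ x ∉ LinearMap.range B.mulVecLin ∧ w = hammingNorm x}

section Aux

open Finset

lemma aux_zmod2_cases {a : ZMod 2} (h : a ≠ 0) : a = 1 := by revert h; revert a; decide

lemma aux_hammingNorm_sumElim {α β : Type} [Fintype α] [Fintype β]
    (f : α → ZMod 2) (g : β → ZMod 2) :
    hammingNorm (Sum.elim f g) = hammingNorm f + hammingNorm g := by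
  classical
  unfold hammingNorm
  rw [← Finset.card_toLeft_add_card_toRight]
  have h1 : (univ.filter fun i => Sum.elim f g i ≠ 0).toLeft
      = univ.filter fun x => f x ≠ 0 := by ext x; simp
  have h2 : (univ.filter fun i => Sum.elim f g i ≠ 0).toRight
      = univ.filter fun x => g x ≠ 0 := by ext x; simp
  rw [h1, h2]

lemma aux_hammingNorm_prodMul {α β : Type} [Fintype α] [Fintype β]
    (f : α → ZMod 2) (g : β → ZMod 2) :
    hammingNorm (fun p : α × β => f p.1 * g p.2) = hammingNorm f * hammingNorm g := by
  classical
  unfold hammingNorm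
  rw [← Finset.card_product]
  congr 1
  ext p
  simp [mul_ne_zero_iff]

lemma aux_hammingNorm_comp_inr_le {α β : Type} [Fintype α] [Fintype β]
    (x : α ⊕ β → ZMod 2) : hammingNorm (fun b => x (Sum.inr b)) ≤ hammingNorm x := by
  classical
  exact Finset.card_le_card_of_injOn Sum.inr (by intro b hb; simpa using hb) Sum.inr_injective.injOn

lemma aux_card_snd_proj {α β : Type} [Fintype α] [Fintype β] [DecidableEq β]
    (f : α × β → ZMod 2) :
    (univ.filter fun m : β => ∃ k, f (k, m) ≠ 0).card ≤ hammingNorm f := by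
  classical
  unfold hammingNorm
  apply Finset.card_le_card_of_surjOn Prod.snd
  intro m hm
  simp only [coe_filter, Set.mem_setOf_eq, mem_univ, true_and] at hm ⊢
  obtain ⟨k, hk⟩ := hm
  exact ⟨(k, m), by simpa using hk, rfl⟩

variable {g1 g0 gm nD1 nD0 : ℕ}

lemma aux_mulVecT_entry {p q : ℕ} (M : Matrix (Fin p) (Fin q) (ZMod 2)) (u : Fin p → ZMod 2)
    (k : Fin q) : Mᵀ.mulVecLin u k = ∑ i, M i k * u i := by
  simp only [Matrix.mulVecLin_apply, Matrix.mulVec, dotProduct, Matrix.transpose_apply]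

lemma aux_B2_entry (dG1 : Matrix (Fin g0) (Fin g1) (ZMod 2))
    (dD : Matrix (Fin nD0) (Fin nD1) (ZMod 2))
    (x : (Fin g0 × Fin nD1) ⊕ (Fin g1 × Fin nD0) → ZMod 2) (k : Fin g1) (j : Fin nD1) :
    (Matrix.fromBlocks (dG1 ⊗ₖ (1 : Matrix (Fin nD1) (Fin nD1) (ZMod 2))) 0
      ((1 : Matrix (Fin g1) (Fin g1) (ZMod 2)) ⊗ₖ dD)
      ((0 : Matrix (Fin g1) (Fin 0) (ZMod 2)) ⊗ₖ (1 : Matrix (Fin nD0) (Fin nD0) (ZMod 2))))ᵀ.mulVecLin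
      x (Sum.inl (k, j)) =
    (∑ i, dG1 i k * x (Sum.inl (i, j))) + ∑ m, dD m j * x (Sum.inr (k, m)) := by
  simp only [Matrix.mulVecLin_apply, Matrix.mulVec, dotProduct, Matrix.transpose_apply,
    Fintype.sum_sum_type, Fintype.sum_prod_type, Matrix.fromBlocks_apply₁₁,
    Matrix.fromBlocks_apply₂₁, Matrix.kroneckerMap_apply, Matrix.one_apply, ite_mul, mul_ite,
    mul_zero, zero_mul, mul_one, one_mul, Finset.sum_ite_eq, Finset.sum_ite_eq',
    Finset.mem_univ, if_true, Finset.sum_ite_irrel, Finset.sum_const_zero]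

lemma aux_B1_entry_l (dG0 : Matrix (Fin gm) (Fin g0) (ZMod 2))
    (dG1 : Matrix (Fin g0) (Fin g1) (ZMod 2))
    (dD : Matrix (Fin nD0) (Fin nD1) (ZMod 2))
    (y : (Fin gm × Fin nD1) ⊕ (Fin g0 × Fin nD0) → ZMod 2) (i : Fin g0) (j : Fin nD1) :
    (Matrix.fromBlocks (dG0 ⊗ₖ (1 : Matrix (Fin nD1) (Fin nD1) (ZMod 2))) 0
      ((1 : Matrix (Fin g0) (Fin g0) (ZMod 2)) ⊗ₖ dD)
      (dG1 ⊗ₖ (1 : Matrix (Fin nD0) (Fin nD0) (ZMod 2))))ᵀ.mulVecLin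
      y (Sum.inl (i, j)) =
    (∑ a, dG0 a i * y (Sum.inl (a, j))) + ∑ m, dD m j * y (Sum.inr (i, m)) := by
  simp only [Matrix.mulVecLin_apply, Matrix.mulVec, dotProduct, Matrix.transpose_apply,
    Fintype.sum_sum_type, Fintype.sum_prod_type, Matrix.fromBlocks_apply₁₁,
    Matrix.fromBlocks_apply₂₁, Matrix.kroneckerMap_apply, Matrix.one_apply, ite_mul, mul_ite,
    mul_zero, zero_mul, mul_one, one_mul, Finset.sum_ite_eq, Finset.sum_ite_eq',
    Finset.mem_univ, if_true, Finset.sum_ite_irrel, Finset.sum_const_zero]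

lemma aux_B1_entry_r (dG0 : Matrix (Fin gm) (Fin g0) (ZMod 2))
    (dG1 : Matrix (Fin g0) (Fin g1) (ZMod 2))
    (dD : Matrix (Fin nD0) (Fin nD1) (ZMod 2))
    (y : (Fin gm × Fin nD1) ⊕ (Fin g0 × Fin nD0) → ZMod 2) (k : Fin g1) (m : Fin nD0) :
    (Matrix.fromBlocks (dG0 ⊗ₖ (1 : Matrix (Fin nD1) (Fin nD1) (ZMod 2))) 0
      ((1 : Matrix (Fin g0) (Fin g0) (ZMod 2)) ⊗ₖ dD)
      (dG1 ⊗ₖ (1 : Matrix (Fin nD0) (Fin nD0) (ZMod 2))))ᵀ.mulVecLin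
      y (Sum.inr (k, m)) =
    ∑ i, dG1 i k * y (Sum.inr (i, m)) := by
  simp only [Matrix.mulVecLin_apply, Matrix.mulVec, dotProduct, Matrix.transpose_apply,
    Fintype.sum_sum_type, Fintype.sum_prod_type, Matrix.fromBlocks_apply₁₂,
    Matrix.fromBlocks_apply₂₂, Matrix.kroneckerMap_apply, Matrix.one_apply, ite_mul, mul_ite,
    mul_zero, zero_mul, mul_one, one_mul, Finset.sum_ite_eq, Finset.sum_ite_eq',
    Finset.mem_univ, if_true, Finset.sum_ite_irrel, Finset.sum_const_zero, Matrix.zero_apply,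
    zero_add]

/-- If `sysDist A B = ⊤` then every cocycle is a coboundary. -/
lemma aux_sysDist_top {ι κ τ : Type} [Fintype ι] [Fintype κ] [Fintype τ]
    {A : Matrix κ ι (ZMod 2)} {B : Matrix ι τ (ZMod 2)} (h : sysDist A B = ⊤) :
    ∀ x, A.mulVecLin x = 0 → x ∈ LinearMap.range B.mulVecLin := by
  intro x hx
  by_contra hmem
  have hle : sysDist A B ≤ (hammingNorm x : ℕ∞) := sInf_le ⟨x, hx, hmem, rfl⟩
  rw [h, top_le_iff] at hle
  exact ENat.coe_ne_top _ hle

/-- If `sysDist A B = n` then every noncobounding cocycle has weight at least `n`. -/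
lemma aux_sysDist_lb {ι κ τ : Type} [Fintype ι] [Fintype κ] [Fintype τ]
    {A : Matrix κ ι (ZMod 2)} {B : Matrix ι τ (ZMod 2)} {n : ℕ} (h : sysDist A B = n) :
    ∀ x, A.mulVecLin x = 0 → x ∉ LinearMap.range B.mulVecLin → n ≤ hammingNorm x := by
  intro x hx hmem
  have hle : sysDist A B ≤ (hammingNorm x : ℕ∞) := sInf_le ⟨x, hx, hmem, rfl⟩
  rw [h] at hle
  exact_mod_cast hle

/-- If `sysDist A B = n` then there is a noncobounding cocycle of weight `n`. -/
lemma aux_sysDist_exists {ι κ τ : Type} [Fintype ι] [Fintype κ] [Fintype τ]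
    {A : Matrix κ ι (ZMod 2)} {B : Matrix ι τ (ZMod 2)} {n : ℕ} (h : sysDist A B = n) :
    ∃ x, A.mulVecLin x = 0 ∧ x ∉ LinearMap.range B.mulVecLin ∧ hammingNorm x = n := by
  unfold sysDist at h
  have hne : {w : ℕ∞ | ∃ x : ι → ZMod 2,
      A.mulVecLin x = 0 ∧ x ∉ LinearMap.range B.mulVecLin ∧ w = hammingNorm x}.Nonempty := by
    by_contra hc
    rw [Set.not_nonempty_iff_eq_empty] at hc
    rw [hc, sInf_empty] at h
    exact ENat.coe_ne_top n h.symm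
  have hmem := csInf_mem hne
  rw [h] at hmem
  obtain ⟨x, h1, h2, h3⟩ := hmem
  exact ⟨x, h1, h2, by exact_mod_cast h3.symm⟩

end Aux

/-- metacheck distance of the ancilla product complex: let
`G = (G₁ --dG1--> G₀ --dG0--> G₋₁)` be a three-term complex with `d¹(G) = 1` and
empty 0-cohomology (`d⁰(G) = ∞`), and let `D = (D₁ --dD--> D₀)` be a two-term
complex with `d⁰(D) = d` and `d¹(D) = 1`.  Then the 1-cosystolic distance of the
product satisfies
`d¹(G⊗D) = min(d¹(G)·d⁰(D), d⁰(G)·d¹(D)) = min(1·d, ∞·1) = d`. -/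
theorem metacheck_distance_of_product
    (g1 g0 gm nD1 nD0 : ℕ) (d : ℕ)
    (dG1 : Matrix (Fin g0) (Fin g1) (ZMod 2))
    (dG0 : Matrix (Fin gm) (Fin g0) (ZMod 2))
    (hG : dG0 * dG1 = 0)
    (dD : Matrix (Fin nD0) (Fin nD1) (ZMod 2))
    -- d¹(G) = 1
    (hcd1G : sysDist (0 : Matrix (Fin 0) (Fin g1) (ZMod 2)) dG1ᵀ = 1)
    -- d⁰(G) = ∞ (empty 0-cohomology)
    (hcd0G : sysDist dG1ᵀ dG0ᵀ = ⊤)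
    -- d⁰(D) = d
    (hcd0D : sysDist dDᵀ (0 : Matrix (Fin nD0) (Fin 0) (ZMod 2)) = (d : ℕ∞))
    -- d¹(D) = 1
    (hcd1D : sysDist (0 : Matrix (Fin 0) (Fin nD1) (ZMod 2)) dDᵀ = 1) :
    -- the product boundary maps ∂₁ and ∂₂ of G ⊗ D; d¹(G⊗D) = ker(∂₂ᵀ)/im(∂₁ᵀ)
    (let B1 : Matrix ((Fin gm × Fin nD1) ⊕ (Fin g0 × Fin nD0))
               ((Fin g0 × Fin nD1) ⊕ (Fin g1 × Fin nD0)) (ZMod 2) :=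
        Matrix.fromBlocks (dG0 ⊗ₖ (1 : Matrix (Fin nD1) (Fin nD1) (ZMod 2))) 0
          ((1 : Matrix (Fin g0) (Fin g0) (ZMod 2)) ⊗ₖ dD)
          (dG1 ⊗ₖ (1 : Matrix (Fin nD0) (Fin nD0) (ZMod 2)))
     let B2 : Matrix ((Fin g0 × Fin nD1) ⊕ (Fin g1 × Fin nD0))
               ((Fin g1 × Fin nD1) ⊕ (Fin 0 × Fin nD0)) (ZMod 2) :=
        Matrix.fromBlocks (dG1 ⊗ₖ (1 : Matrix (Fin nD1) (Fin nD1) (ZMod 2))) 0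
          ((1 : Matrix (Fin g1) (Fin g1) (ZMod 2)) ⊗ₖ dD)
          ((0 : Matrix (Fin g1) (Fin 0) (ZMod 2)) ⊗ₖ (1 : Matrix (Fin nD0) (Fin nD0) (ZMod 2)))
     sysDist B2ᵀ B1ᵀ = (d : ℕ∞)) := by
  classical
  show sysDist _ _ = (d : ℕ∞)
  have addcancel : ∀ a b : ZMod 2, a + b + b = a := by decide
  have char2 : ∀ a b : ZMod 2, a + b = 0 → b = a := by decide
  -- extract data from the hypotheses
  have hexact := aux_sysDist_top hcd0G
  have hDlb := aux_sysDist_lb hcd0D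
  obtain ⟨a, ha0, har, haw⟩ := aux_sysDist_exists hcd0D
  obtain ⟨b, -, hbr, hbw⟩ := aux_sysDist_exists hcd1G
  have hane : a ≠ 0 := by
    intro h
    apply har
    rw [h]
    exact Submodule.zero_mem _
  -- the weight-`d` witness cocycle
  refine le_antisymm ?upper ?lower
  case upper =>
    apply sInf_le
    refine ⟨Sum.elim 0 (fun p => b p.1 * a p.2), ?_, ?_, ?_⟩
    · funext c
      rcases c with ⟨k, j⟩ | p
      · rw [aux_B2_entry]
        simp only [Sum.elim_inl, Sum.elim_inr, Pi.zero_apply, mul_zero,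
          Finset.sum_const_zero, zero_add]
        have h1 : ∑ m, dD m j * (b k * a m) = b k * ∑ m, dD m j * a m := by
          rw [Finset.mul_sum]
          exact Finset.sum_congr rfl fun m _ => mul_left_comm _ _ _
        have h2 := congrFun ha0 j
        rw [aux_mulVecT_entry] at h2
        simp only [Pi.zero_apply] at h2
        rw [h1, h2, mul_zero]
      · exact p.1.elim0
    · rintro ⟨y, hy⟩
      obtain ⟨m₀, hm₀⟩ := Function.ne_iff.mp hane
      apply hbr
      refine ⟨fun i => y (Sum.inr (i, m₀)), ?_⟩
      funext k
      rw [aux_mulVecT_entry]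
      have := congrFun hy (Sum.inr (k, m₀))
      rw [aux_B1_entry_r] at this
      rw [this]
      simp [aux_zmod2_cases hm₀]
    · rw [aux_hammingNorm_sumElim, aux_hammingNorm_prodMul, hammingNorm_zero, hbw, haw,
        zero_add, one_mul]
  case lower =>
    apply le_sInf
    rintro w ⟨x, hcoc, hnc, rfl⟩
    by_contra hlt
    push_neg at hlt
    have hxd : hammingNorm x < d := by exact_mod_cast hlt
    -- the cocycle condition, entrywise
    have hcc : ∀ (k : Fin g1) (j : Fin nD1),
        (∑ i, dG1 i k * x (Sum.inl (i, j))) + ∑ m, dD m j * x (Sum.inr (k, m)) = 0 := by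
      intro k j
      rw [← aux_B2_entry dG1 dD x k j, hcoc]
      rfl
    -- the columns of the second block of x are coboundaries of G
    set v : Fin nD0 → Fin g1 → ZMod 2 := fun m k => x (Sum.inr (k, m)) with hv_def
    have hsum : ∀ (j : Fin nD1) (k : Fin g1),
        (∑ m, dD m j • v m) k = dG1ᵀ.mulVecLin (fun i => x (Sum.inl (i, j))) k := by
      intro j k
      rw [aux_mulVecT_entry]
      simp only [Finset.sum_apply, Pi.smul_apply, smul_eq_mul]
      exact char2 _ _ (hcc k j)
    have hv : ∀ m, v m ∈ LinearMap.range dG1ᵀ.mulVecLin := by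
      by_contra hno
      push_neg at hno
      obtain ⟨m₀, hm₀⟩ := hno
      set V := LinearMap.range dG1ᵀ.mulVecLin with hV
      have hq : V.mkQ (v m₀) ≠ 0 := by
        simp only [Submodule.mkQ_apply, ne_eq, Submodule.Quotient.mk_eq_zero]
        exact hm₀
      obtain ⟨φ, hφ⟩ : ∃ φ : Module.Dual (ZMod 2) ((Fin g1 → ZMod 2) ⧸ V),
          φ (V.mkQ (v m₀)) ≠ 0 := by
        by_contra hall
        push_neg at hall
        exact hq ((Module.forall_dual_apply_eq_zero_iff (ZMod 2) _).mp hall)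
      set s : Fin nD0 → ZMod 2 := fun m => φ (V.mkQ (v m)) with hs_def
      have hsker : dDᵀ.mulVecLin s = 0 := by
        funext j
        rw [aux_mulVecT_entry]
        have h1 : ∑ m, dD m j * s m = φ (V.mkQ (∑ m, dD m j • v m)) := by
          rw [map_sum, map_sum]
          exact Finset.sum_congr rfl fun m _ => by
            rw [_root_.map_smul, _root_.map_smul, smul_eq_mul]
        have h2 : (∑ m, dD m j • v m) ∈ V :=
          ⟨fun i => x (Sum.inl (i, j)), (funext (hsum j)).symm⟩
        have h3 : V.mkQ (∑ m, dD m j • v m) = 0 := (Submodule.Quotient.mk_eq_zero V).mpr h2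
        rw [h1, h3, map_zero]
        rfl
      have hsne : s ≠ 0 := fun h => hφ (congrFun h m₀)
      have hdle : d ≤ hammingNorm s := hDlb s hsker (by
        intro hmem
        apply hsne
        rwa [Matrix.mulVecLin_zero, LinearMap.range_zero, Submodule.mem_bot] at hmem)
      -- but the weight of s is less than d
      have hsub : (Finset.univ.filter fun m => s m ≠ 0)
          ⊆ Finset.univ.filter fun m : Fin nD0 => ∃ k, x (Sum.inr (k, m)) ≠ 0 := by
        intro m hm
        simp only [Finset.mem_filter, Finset.mem_univ, true_and] at hm ⊢
        by_contra hk
        push_neg at hk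
        apply hm
        have : v m = 0 := funext fun k => hk k
        rw [hs_def]
        simp only [this, map_zero]
      have hle2 : hammingNorm s ≤ hammingNorm x :=
        le_trans (le_trans (Finset.card_le_card hsub)
          (by convert aux_card_snd_proj (fun p : Fin g1 × Fin nD0 => x (Sum.inr p)); rfl))
          (aux_hammingNorm_comp_inr_le x)
      omega
    -- build the coboundary preimage
    choose wv hwv using hv
    have key : ∀ (m : Fin nD0) (k : Fin g1), ∑ i, dG1 i k * wv m i = x (Sum.inr (k, m)) := by
      intro m k
      have := congrFun (hwv m) k
      rwa [aux_mulVecT_entry] at this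
    have hu' : ∀ j : Fin nD1, ∃ z, dG0ᵀ.mulVecLin z =
        fun i => x (Sum.inl (i, j)) + ∑ m, dD m j * wv m i := by
      intro j
      apply hexact
      funext k
      rw [aux_mulVecT_entry]
      simp only [mul_add, Finset.sum_add_distrib, Finset.mul_sum]
      rw [Finset.sum_comm (s := Finset.univ) (t := Finset.univ)
        (f := fun i m => dG1 i k * (dD m j * wv m i))]
      have h2 : ∀ m : Fin nD0, (∑ i, dG1 i k * (dD m j * wv m i)) = dD m j * x (Sum.inr (k, m)) := by
        intro m
        rw [← key m k, Finset.mul_sum]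
        exact Finset.sum_congr rfl fun i _ => mul_left_comm _ _ _
      rw [Finset.sum_congr rfl fun m _ => h2 m]
      simpa using hcc k j
    choose z hz using hu'
    apply hnc
    refine ⟨Sum.elim (fun p => z p.2 p.1) (fun p => wv p.2 p.1), ?_⟩
    funext c
    rcases c with ⟨i, j⟩ | ⟨k, m⟩
    · rw [aux_B1_entry_l]
      simp only [Sum.elim_inl, Sum.elim_inr]
      have h3 := congrFun (hz j) i
      rw [aux_mulVecT_entry] at h3
      rw [h3]
      exact addcancel _ _
    · rw [aux_B1_entry_r]
      simp only [Sum.elim_inr]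
      exact key m k
end
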